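/- arXiv:1410.5226 — 9 statements merged into one kernel-verified Lean document; each statement's English description precedes it below -/
import Mathlib

section
/- Let c > 0, let T ∈ (0, ∞], and let θ : [0, T) → ℝ be differentiable with θ′(t) ≤ −θ(t)²/c for all t ∈ [0, T). If θ(0) < 0, then for every t ∈ [0, T) with t < c/(−θ(0)) one has c + θ(0)·t > 0 and θ(t) ≤ c·θ(0)/(c + θ(0)·t). -/
/-- Focusing comparison estimate for the Raychaudhuri inequality:
if `θ' ≤ -θ²/c` on `[0, T)` and `θ 0 < 0`, then for every `t ∈ [0, T)` with
`t < c / (-θ 0)` one has `c + θ 0 * t > 0` and `θ t ≤ c * θ 0 / (c + θ 0 * t)`. -/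
theorem raychaudhuri_comparison_estimate
    (c : ℝ) (hc : 0 < c) (T : EReal) (hT : 0 < T)
    (θ : ℝ → ℝ)
    (hdiff : ∀ t : ℝ, 0 ≤ t → (t : EReal) < T → DifferentiableAt ℝ θ t)
    (hineq : ∀ t : ℝ, 0 ≤ t → (t : EReal) < T → deriv θ t ≤ -(θ t) ^ 2 / c)
    (h0 : θ 0 < 0)
    (t : ℝ) (ht0 : 0 ≤ t) (htT : (t : EReal) < T) (htb : t < c / (-θ 0)) :
    0 < c + θ 0 * t ∧ θ t ≤ c * θ 0 / (c + θ 0 * t) := by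
  have hneg0 : (0:ℝ) < -θ 0 := by linarith
  have hmul : t * (-θ 0) < c := (lt_div_iff₀ hneg0).mp htb
  have hpos : 0 < c + θ 0 * t := by nlinarith
  refine ⟨hpos, ?_⟩
  -- membership in [0,t] implies the hypotheses apply
  have hsT : ∀ s ∈ Set.Icc (0:ℝ) t, (s : EReal) < T := by
    intro s hs
    exact lt_of_le_of_lt (EReal.coe_le_coe_iff.mpr hs.2) htT
  have hdiff' : ∀ s ∈ Set.Icc (0:ℝ) t, DifferentiableAt ℝ θ s := fun s hs =>
    hdiff s hs.1 (hsT s hs)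
  have hcont : ContinuousOn θ (Set.Icc 0 t) := fun s hs =>
    (hdiff' s hs).continuousAt.continuousWithinAt
  -- θ is antitone on [0,t]
  have hanti : AntitoneOn θ (Set.Icc 0 t) := by
    apply antitoneOn_of_deriv_nonpos (convex_Icc 0 t) hcont
    · intro s hs
      exact (hdiff' s (interior_subset hs)).differentiableWithinAt
    · intro s hs
      have hs' := interior_subset hs
      have h1 := hineq s hs'.1 (hsT s hs')
      have h2 : -(θ s) ^ 2 / c ≤ 0 :=
        div_nonpos_of_nonpos_of_nonneg (by nlinarith [sq_nonneg (θ s)]) hc.le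
      linarith
  have h0mem : (0:ℝ) ∈ Set.Icc (0:ℝ) t := ⟨le_refl 0, ht0⟩
  have hθneg : ∀ s ∈ Set.Icc (0:ℝ) t, θ s < 0 := by
    intro s hs
    have := hanti h0mem hs hs.1
    linarith
  -- derivative of g s = c / θ s - s
  have hg : ∀ s ∈ Set.Icc (0:ℝ) t,
      HasDerivAt (fun x => c / θ x - x)
        ((0 * θ s - c * deriv θ s) / θ s ^ 2 - 1) s := by
    intro s hs
    have hd := (hdiff' s hs).hasDerivAt
    exact ((hasDerivAt_const s c).div hd (ne_of_lt (hθneg s hs))).sub (hasDerivAt_id s)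
  have hmono : MonotoneOn (fun x => c / θ x - x) (Set.Icc 0 t) := by
    apply monotoneOn_of_deriv_nonneg (convex_Icc 0 t)
    · intro s hs
      exact ((hg s hs).continuousAt).continuousWithinAt
    · intro s hs
      exact ((hg s (interior_subset hs)).differentiableAt).differentiableWithinAt
    · intro s hs
      have hs' := interior_subset hs
      rw [(hg s hs').deriv]
      have h1 := hineq s hs'.1 (hsT s hs')
      have h2 := hθneg s hs'
      have hθ2 : 0 < θ s ^ 2 := by nlinarith
      have hkey : θ s ^ 2 ≤ 0 * θ s - c * deriv θ s := by
        have := mul_le_mul_of_nonneg_left h1 hc.le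
        have hcc : c * (-(θ s) ^ 2 / c) = -(θ s) ^ 2 := by
          field_simp
        nlinarith
      have : 1 ≤ (0 * θ s - c * deriv θ s) / θ s ^ 2 :=
        (one_le_div hθ2).mpr hkey
      linarith
  have htmem : t ∈ Set.Icc (0:ℝ) t := ⟨ht0, le_refl t⟩
  have hG := hmono h0mem htmem ht0
  simp only at hG
  -- hG : c / θ 0 - 0 ≤ c / θ t - t
  have hbt : θ t < 0 := hθneg t htmem
  have hane : θ 0 ≠ 0 := ne_of_lt h0
  have hbne : θ t ≠ 0 := ne_of_lt hbt
  have h2 : c / θ 0 + t ≤ c / θ t := by linarith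
  have hm : 0 < θ t * θ 0 := mul_pos_of_neg_of_neg hbt h0
  have hprod : (c / θ 0 + t) * (θ t * θ 0) ≤ (c / θ t) * (θ t * θ 0) :=
    mul_le_mul_of_nonneg_right h2 hm.le
  have e1 : (c / θ t) * (θ t * θ 0) = c * θ 0 := by
    field_simp
  have e2 : (c / θ 0 + t) * (θ t * θ 0) = θ t * (c + θ 0 * t) := by
    field_simp
  rw [e1, e2] at hprod
  exact (le_div_iff₀ hpos).mpr hprod
end

section
/- Let c > 0, let T ∈ (0, ∞], and let θ : [0, T) → ℝ be differentiable with θ′(t) ≤ −θ(t)²/c for all t ∈ [0, T). If θ(0) < 0, then T ≤ c/(−θ(0)); that is, θ cannot remain finite (be defined as a differentiable solution of the inequality) beyond the parameter value c/(−θ(0)). -/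
/-- Focusing effect: a differentiable solution of the Riccati differential
inequality `θ' ≤ -θ²/c` on `[0, T)` with `θ 0 < 0` cannot exist beyond the
parameter value `c / (-θ 0)`; that is, `T ≤ c / (-θ 0)`. -/
theorem raychaudhuri_focusing
    (c : ℝ) (hc : 0 < c) (T : EReal) (hT : 0 < T)
    (θ : ℝ → ℝ)
    (hdiff : ∀ t : ℝ, 0 ≤ t → (t : EReal) < T → DifferentiableAt ℝ θ t)
    (hineq : ∀ t : ℝ, 0 ≤ t → (t : EReal) < T → deriv θ t ≤ -(θ t) ^ 2 / c)
    (h0 : θ 0 < 0) :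
    T ≤ ((c / (-θ 0) : ℝ) : EReal) := by
  by_contra hcon
  push_neg at hcon
  have hm : (0:ℝ) < -θ 0 := neg_pos.2 h0
  have hq : (0:ℝ) < c / (-θ 0) := div_pos hc hm
  obtain ⟨z, hz1, hz2⟩ := exists_between hcon
  have hzbot : z ≠ ⊥ := fun h => by simp [h] at hz1
  have hztop : z ≠ ⊤ := by
    intro h
    rw [h] at hz2
    exact absurd hz2 (by simp)
  set t₀ := z.toReal with ht₀def
  have hz : z = (t₀ : EReal) := (EReal.coe_toReal hztop hzbot).symm
  rw [hz] at hz1 hz2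
  have ht₀gt : c / (-θ 0) < t₀ := by exact_mod_cast hz1
  have ht₀pos : (0:ℝ) < t₀ := hq.trans ht₀gt
  -- every t in [0, t₀] satisfies the hypotheses
  have hmem : ∀ t : ℝ, t ∈ Set.Icc (0:ℝ) t₀ → 0 ≤ t ∧ (t : EReal) < T := by
    intro t ht
    refine ⟨ht.1, lt_of_le_of_lt ?_ hz2⟩
    exact_mod_cast ht.2
  -- θ is antitone on [0, t₀]
  have hθanti : AntitoneOn θ (Set.Icc 0 t₀) := by
    apply antitoneOn_of_deriv_nonpos (convex_Icc 0 t₀)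
    · intro t ht
      exact (hdiff t (hmem t ht).1 (hmem t ht).2).continuousAt.continuousWithinAt
    · intro t ht
      rw [interior_Icc] at ht
      exact (hdiff t (hmem t ⟨ht.1.le, ht.2.le⟩).1
        (hmem t ⟨ht.1.le, ht.2.le⟩).2).differentiableWithinAt
    · intro t ht
      rw [interior_Icc] at ht
      have h1 := hineq t (hmem t ⟨ht.1.le, ht.2.le⟩).1 (hmem t ⟨ht.1.le, ht.2.le⟩).2
      have h2 : -(θ t) ^ 2 / c ≤ 0 :=
        div_nonpos_of_nonpos_of_nonneg (neg_nonpos.2 (sq_nonneg _)) hc.le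
      linarith
  -- θ is negative on [0, t₀]
  have hθneg : ∀ t ∈ Set.Icc (0:ℝ) t₀, θ t < 0 := by
    intro t ht
    have := hθanti (Set.left_mem_Icc.2 ht₀pos.le) ht ht.1
    linarith
  -- the auxiliary function g = -(θ)⁻¹ + t/c
  set g : ℝ → ℝ := fun t => -(θ t)⁻¹ + t / c with hg
  have hgderiv : ∀ t ∈ Set.Icc (0:ℝ) t₀,
      HasDerivAt g (deriv θ t / (θ t) ^ 2 + 1 / c) t := by
    intro t ht
    have hne : θ t ≠ 0 := (hθneg t ht).ne
    have hd := (hdiff t (hmem t ht).1 (hmem t ht).2).hasDerivAt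
    have h1 : HasDerivAt (fun x => -(θ x)⁻¹) (deriv θ t / (θ t) ^ 2) t := by
      have := (hd.inv hne).neg
      refine this.congr_deriv ?_
      ring
    have h2 : HasDerivAt (fun x : ℝ => x / c) (1 / c) t := by
      simpa using (hasDerivAt_id t).div_const c
    exact h1.add h2
  have hganti : AntitoneOn g (Set.Icc 0 t₀) := by
    apply antitoneOn_of_deriv_nonpos (convex_Icc 0 t₀)
    · intro t ht
      exact (hgderiv t ht).differentiableAt.continuousAt.continuousWithinAt
    · intro t ht
      rw [interior_Icc] at ht
      exact (hgderiv t ⟨ht.1.le, ht.2.le⟩).differentiableAt.differentiableWithinAt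
    · intro t ht
      rw [interior_Icc] at ht
      have ht' : t ∈ Set.Icc (0:ℝ) t₀ := ⟨ht.1.le, ht.2.le⟩
      rw [(hgderiv t ht').deriv]
      have hsq : (0:ℝ) < (θ t) ^ 2 := pow_two_pos_of_ne_zero (hθneg t ht').ne
      have h1 := hineq t (hmem t ht').1 (hmem t ht').2
      have h3 : deriv θ t / (θ t) ^ 2 ≤ -(1 / c) := by
        rw [div_le_iff₀ hsq]
        have he : -(1 / c) * (θ t) ^ 2 = -(θ t) ^ 2 / c := by ring
        rw [he]; exact h1
      linarith
  -- conclude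
  have key : g t₀ ≤ g 0 :=
    hganti (Set.left_mem_Icc.2 ht₀pos.le) (Set.right_mem_Icc.2 ht₀pos.le) ht₀pos.le
  have hθt₀ : θ t₀ < 0 := hθneg t₀ (Set.right_mem_Icc.2 ht₀pos.le)
  have hinv₀ : (θ t₀)⁻¹ < 0 := inv_neg''.2 hθt₀
  simp only [hg] at key
  -- key : -(θ t₀)⁻¹ + t₀ / c ≤ -(θ 0)⁻¹ + 0 / c
  have key' : -(θ t₀)⁻¹ + t₀ / c ≤ -(θ 0)⁻¹ := by simpa using key
  have h4 : t₀ / c < (-θ 0)⁻¹ := by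
    have hiq : -(θ 0)⁻¹ = (-θ 0)⁻¹ := by rw [inv_neg]
    rw [← hiq]
    linarith [key', hinv₀]
  have h5 : t₀ < (-θ 0)⁻¹ * c := (div_lt_iff₀ hc).1 h4
  have h6 : c < t₀ * (-θ 0) := (div_lt_iff₀ hm).1 ht₀gt
  have hinvm : (-θ 0) * (-θ 0)⁻¹ = 1 := mul_inv_cancel₀ hm.ne'
  nlinarith [mul_lt_mul_of_pos_right h5 hm]
end

section
/- Let c > 0, b > 0, let T ∈ (0, ∞], and let θ : (−T, 0] → ℝ be differentiable with θ′(t) ≤ −θ(t)²/c for all t ∈ (−T, 0]. If θ(0) ≥ b, then T ≤ c/b. -/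
/-- Analytic core of Hawking's cosmological singularity theorem:
if `θ' ≤ -θ²/c` on `(-T, 0]` and `θ 0 ≥ b > 0`, then `T ≤ c / b`. -/
theorem hawking_past_incompleteness
    (c b : ℝ) (hc : 0 < c) (hb : 0 < b) (T : EReal) (hT : 0 < T)
    (θ : ℝ → ℝ)
    (hdiff : ∀ t : ℝ, t ≤ 0 → -T < (t : EReal) → DifferentiableAt ℝ θ t)
    (hineq : ∀ t : ℝ, t ≤ 0 → -T < (t : EReal) → deriv θ t ≤ -(θ t) ^ 2 / c)
    (h0 : b ≤ θ 0) :
    T ≤ ((c / b : ℝ) : EReal) := by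
  -- key: every t ≤ 0 with -T < t satisfies -t ≤ c/b
  have key : ∀ t : ℝ, t ≤ 0 → -T < (t : EReal) → -t ≤ c / b := by
    intro t ht htT
    -- differentiability and inequality on points of [t, 0]
    have hmem : ∀ s ∈ Set.Icc t 0, s ≤ 0 ∧ -T < (s : EReal) := by
      intro s hs
      refine ⟨hs.2, lt_of_lt_of_le htT ?_⟩
      exact_mod_cast EReal.coe_le_coe_iff.mpr hs.1
    have hdiffI : ∀ s ∈ Set.Icc t 0, DifferentiableAt ℝ θ s := fun s hs =>
      hdiff s (hmem s hs).1 (hmem s hs).2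
    -- θ is antitone on [t,0]
    have hanti : AntitoneOn θ (Set.Icc t 0) := by
      apply antitoneOn_of_deriv_nonpos (convex_Icc t 0)
      · exact fun s hs => (hdiffI s hs).continuousAt.continuousWithinAt
      · intro s hs
        rw [interior_Icc] at hs
        exact (hdiffI s ⟨hs.1.le, hs.2.le⟩).differentiableWithinAt
      · intro s hs
        rw [interior_Icc] at hs
        have h1 := hineq s (hmem s ⟨hs.1.le, hs.2.le⟩).1 (hmem s ⟨hs.1.le, hs.2.le⟩).2
        have : -(θ s) ^ 2 / c ≤ 0 :=
          div_nonpos_of_nonpos_of_nonneg (neg_nonpos.mpr (sq_nonneg _)) hc.le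
        linarith
    -- θ ≥ b on [t,0]
    have hpos : ∀ s ∈ Set.Icc t 0, b ≤ θ s := by
      intro s hs
      exact le_trans h0 (hanti hs (Set.right_mem_Icc.mpr ht) hs.2)
    have hne : ∀ s ∈ Set.Icc t 0, θ s ≠ 0 := fun s hs =>
      ne_of_gt (lt_of_lt_of_le hb (hpos s hs))
    -- ψ s = (θ s)⁻¹ - s/c is monotone on [t,0]
    set ψ : ℝ → ℝ := fun s => (θ s)⁻¹ - s / c with hψ
    have hmono : MonotoneOn ψ (Set.Icc t 0) := by
      apply monotoneOn_of_deriv_nonneg (convex_Icc t 0)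
      · refine ContinuousOn.sub ?_ (by fun_prop)
        exact ContinuousOn.inv₀
          (fun s hs => (hdiffI s hs).continuousAt.continuousWithinAt) hne
      · intro s hs
        rw [interior_Icc] at hs
        have hsI : s ∈ Set.Icc t 0 := ⟨hs.1.le, hs.2.le⟩
        exact (((hdiffI s hsI).inv (hne s hsI)).sub
          ((differentiable_id.div_const c) s)).differentiableWithinAt
      · intro s hs
        rw [interior_Icc] at hs
        have hsI : s ∈ Set.Icc t 0 := ⟨hs.1.le, hs.2.le⟩
        have hθ := hdiffI s hsI
        have hne' := hne s hsI
        have hd : HasDerivAt ψ (-deriv θ s / (θ s) ^ 2 - 1 / c) s := by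
          have h1 : HasDerivAt (fun s => (θ s)⁻¹) (-deriv θ s / (θ s) ^ 2) s :=
            hθ.hasDerivAt.inv hne'
          have h2 : HasDerivAt (fun s => s / c) (1 / c) s := by
            simpa using (hasDerivAt_id s).div_const c
          exact h1.sub h2
        rw [hd.deriv]
        have h1 := hineq s (hmem s hsI).1 (hmem s hsI).2
        have hθpos : 0 < θ s := lt_of_lt_of_le hb (hpos s hsI)
        have hsq : 0 < (θ s) ^ 2 := by positivity
        rw [sub_nonneg, div_le_div_iff₀ hc hsq, one_mul]
        have h1' : deriv θ s * c ≤ -(θ s) ^ 2 := (le_div_iff₀ hc).mp h1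
        nlinarith
    -- conclude
    have h1 : ψ t ≤ ψ 0 := hmono (Set.left_mem_Icc.mpr ht) (Set.right_mem_Icc.mpr ht) ht
    have h2 : (θ 0)⁻¹ ≤ 1 / b := by
      rw [one_div]
      exact inv_anti₀ hb h0
    have h3 : 0 < (θ t)⁻¹ :=
      inv_pos.mpr (lt_of_lt_of_le hb (hpos t (Set.left_mem_Icc.mpr ht)))
    simp only [hψ, zero_div, sub_zero] at h1
    have h4 : -t / c ≤ 1 / b := by rw [neg_div]; linarith
    rw [div_le_div_iff₀ hc hb, one_mul] at h4
    rw [le_div_iff₀ hb]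
    linarith
  -- now conclude T ≤ c/b in EReal
  by_contra hcon
  push_neg at hcon
  obtain ⟨r, hr1, hr2⟩ := EReal.exists_between_coe_real hcon
  have hr0 : c / b < r := EReal.coe_lt_coe_iff.mp hr1
  have hrpos : 0 < r := lt_trans (div_pos hc hb) hr0
  have h := key (-r) (by linarith) ?_
  · rw [neg_neg] at h; linarith
  · rw [show ((-r : ℝ) : EReal) = -(r : EReal) by exact_mod_cast EReal.coe_neg r]
    exact EReal.neg_lt_neg_iff.mpr hr2
end

section
/- Let c > 0 and let θ : [0, ∞) → ℝ be differentiable with θ′(t) ≤ −θ(t)²/c for all t ≥ 0. Then θ(t) ≥ 0 for all t ≥ 0. -/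
/-- Along a future-complete congruence obeying the convergence condition, the
expansion can never become negative: if `θ' ≤ -θ²/c` on `[0, ∞)` then `θ ≥ 0`
on `[0, ∞)`. -/
theorem expansion_nonneg_of_future_complete
    (c : ℝ) (hc : 0 < c) (θ : ℝ → ℝ)
    (hdiff : ∀ t : ℝ, 0 ≤ t → DifferentiableAt ℝ θ t)
    (hineq : ∀ t : ℝ, 0 ≤ t → deriv θ t ≤ -(θ t) ^ 2 / c) :
    ∀ t : ℝ, 0 ≤ t → 0 ≤ θ t := by
  intro t₀ ht₀
  by_contra hneg
  push_neg at hneg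
  -- θ is antitone on [0, ∞) since θ' ≤ -θ²/c ≤ 0
  have hcont : ContinuousOn θ (Set.Ici (0 : ℝ)) := fun t ht =>
    (hdiff t ht).continuousAt.continuousWithinAt
  have hanti : AntitoneOn θ (Set.Ici (0 : ℝ)) := by
    apply antitoneOn_of_deriv_nonpos (convex_Ici 0) hcont
    · intro t ht
      rw [interior_Ici] at ht
      exact (hdiff t ht.le).differentiableWithinAt
    · intro t ht
      rw [interior_Ici] at ht
      have h := hineq t ht.le
      have h2 : -θ t ^ 2 / c ≤ 0 :=
        div_nonpos_of_nonpos_of_nonneg (neg_nonpos.mpr (sq_nonneg _)) hc.le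
      linarith
  have hθlt : ∀ t, t₀ ≤ t → θ t < 0 := fun t ht =>
    lt_of_le_of_lt (hanti (Set.mem_Ici.mpr ht₀) (Set.mem_Ici.mpr (ht₀.trans ht)) ht) hneg
  set a : ℝ := -θ t₀ with ha
  have ha0 : 0 < a := by simp only [ha]; linarith
  set g : ℝ → ℝ := fun t => (θ t)⁻¹ - t / c with hg
  have hgdiff : ∀ t, t₀ ≤ t → DifferentiableAt ℝ g t := by
    intro t ht
    exact ((hdiff t (ht₀.trans ht)).inv (hθlt t ht).ne).sub
      (differentiableAt_id.div_const c)
  have hgderiv : ∀ t, t₀ < t → 0 ≤ deriv g t := by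
    intro t ht
    have hθt := hθlt t ht.le
    have hsq : 0 < (θ t) ^ 2 := by nlinarith
    have hd : HasDerivAt g (-deriv θ t / (θ t) ^ 2 - 1 / c) t :=
      ((hdiff t (ht₀.trans ht.le)).hasDerivAt.inv hθt.ne).sub
        ((hasDerivAt_id t).div_const c)
    have h1 : deriv g t = -deriv θ t / (θ t) ^ 2 - 1 / c := hd.deriv
    have key := hineq t (ht₀.trans ht.le)
    rw [le_div_iff₀ hc] at key
    rw [h1, sub_nonneg, div_le_div_iff₀ hc hsq]
    nlinarith
  have hmono : MonotoneOn g (Set.Ici t₀) := by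
    apply monotoneOn_of_deriv_nonneg (convex_Ici t₀)
    · exact fun t ht => (hgdiff t ht).continuousAt.continuousWithinAt
    · intro t ht
      rw [interior_Ici] at ht
      exact (hgdiff t ht.le).differentiableWithinAt
    · intro t ht
      rw [interior_Ici] at ht
      exact hgderiv t ht
  set T : ℝ := t₀ + c / a with hT
  have hTge : t₀ ≤ T := by
    rw [hT]
    have : 0 < c / a := by positivity
    linarith
  have hgT := hmono (Set.mem_Ici.mpr le_rfl) (Set.mem_Ici.mpr hTge) hTge
  have hθt₀ : θ t₀ = -a := by simp [ha]
  have hinvT : (θ T)⁻¹ < 0 := inv_neg''.mpr (hθlt T hTge)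
  have hc' : c ≠ 0 := hc.ne'
  have ha' : a ≠ 0 := ha0.ne'
  have hTc : T / c = t₀ / c + 1 / a := by
    rw [hT]; field_simp
  have hinvt₀ : (θ t₀)⁻¹ = -(1 / a) := by
    rw [hθt₀]; field_simp
  simp only [hg] at hgT
  rw [hinvt₀, hTc] at hgT
  linarith
end

section
/- Let c > 0 and let θ : ℝ → ℝ be differentiable with θ′(t) ≤ −θ(t)²/c for all t ∈ ℝ. Then θ(t) = 0 for all t ∈ ℝ. -/
/-- Auxiliary half: under the Riccati inequality, `θ` is nonnegative everywhere. -/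
lemma expansion_nonneg_aux
    (c : ℝ) (hc : 0 < c) (θ : ℝ → ℝ)
    (hdiff : Differentiable ℝ θ)
    (hineq : ∀ t : ℝ, deriv θ t ≤ -(θ t) ^ 2 / c) :
    ∀ t : ℝ, 0 ≤ θ t := by
  by_contra h
  push_neg at h
  obtain ⟨t₀, ht₀⟩ := h
  -- θ is antitone since θ' ≤ 0
  have hθ'le : ∀ t, deriv θ t ≤ 0 := fun t =>
    (hineq t).trans (by rw [neg_div]; exact neg_nonpos.2 (div_nonneg (sq_nonneg _) hc.le))
  have hanti : Antitone θ := antitone_of_deriv_nonpos hdiff hθ'le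
  -- θ is negative on [t₀, ∞)
  have hneg : ∀ t ∈ Set.Ici t₀, θ t < 0 := fun t ht => lt_of_le_of_lt (hanti ht) ht₀
  -- consider f = 1/θ - t/c, which is monotone on [t₀, ∞)
  set f : ℝ → ℝ := fun t => (θ t)⁻¹ - t / c with hf
  have hderiv : ∀ t ∈ Set.Ici t₀,
      HasDerivAt f (-(deriv θ t) / (θ t) ^ 2 - 1 / c) t := by
    intro t ht
    have h1 : HasDerivAt (fun s => (θ s)⁻¹) (-(deriv θ t) / (θ t) ^ 2) t :=
      (hdiff t).hasDerivAt.inv (hneg t ht).ne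
    have h2 : HasDerivAt (fun s : ℝ => s / c) (1 / c) t := by
      simpa using (hasDerivAt_id t).div_const c
    exact h1.sub h2
  have hmono : MonotoneOn f (Set.Ici t₀) := by
    apply monotoneOn_of_deriv_nonneg (convex_Ici t₀)
    · intro t ht
      exact (hderiv t ht).continuousAt.continuousWithinAt
    · intro t ht
      exact (hderiv t (interior_subset ht)).differentiableAt.differentiableWithinAt
    · intro t ht
      rw [(hderiv t (interior_subset ht)).deriv]
      have hθt : θ t < 0 := hneg t (interior_subset ht)
      have hsq : (0:ℝ) < (θ t) ^ 2 := by nlinarith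
      have h1 : (θ t) ^ 2 / c ≤ -(deriv θ t) := by
        have := hineq t; rw [neg_div] at this; linarith
      have h2 : (θ t) ^ 2 ≤ -(deriv θ t) * c := (div_le_iff₀ hc).1 h1
      rw [sub_nonneg, div_le_div_iff₀ hc hsq]
      linarith
  -- derive a contradiction at a large time T
  obtain ⟨T, hT⟩ : ∃ T : ℝ, T = t₀ + c * (1 - (θ t₀)⁻¹) := ⟨_, rfl⟩
  have hinv₀ : (θ t₀)⁻¹ < 0 := inv_neg''.2 ht₀
  have hTge : t₀ ≤ T := by
    have hpos : 0 < c * (1 - (θ t₀)⁻¹) := mul_pos hc (by linarith)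
    linarith [hT, hpos]
  have hle : f t₀ ≤ f T := hmono (Set.self_mem_Ici) hTge hTge
  have hinvT : (θ T)⁻¹ < 0 := inv_neg''.2 (hneg T hTge)
  have : (θ t₀)⁻¹ - t₀ / c ≤ (θ T)⁻¹ - T / c := hle
  have hTval : T / c = t₀ / c + (1 - (θ t₀)⁻¹) := by
    field_simp [hT]; rw [hT]; ring
  nlinarith [this, hinvT, hTval]

/-- Raychaudhuri's observation: a congruence complete to the past and to the
future obeying the convergence condition must have identically vanishing
expansion: if `θ' ≤ -θ²/c` on all of `ℝ` then `θ ≡ 0`. -/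
theorem expansion_zero_of_complete
    (c : ℝ) (hc : 0 < c) (θ : ℝ → ℝ)
    (hdiff : Differentiable ℝ θ)
    (hineq : ∀ t : ℝ, deriv θ t ≤ -(θ t) ^ 2 / c) :
    ∀ t : ℝ, θ t = 0 := by
  have hge : ∀ t, 0 ≤ θ t := expansion_nonneg_aux c hc θ hdiff hineq
  -- time-reversed function
  set φ : ℝ → ℝ := fun t => -θ (-t) with hφ
  have hφderiv : ∀ t, HasDerivAt φ (deriv θ (-t)) t := by
    intro t
    have h1 : HasDerivAt (fun s : ℝ => θ (-s)) (deriv θ (-t) * (-1)) t :=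
      (hdiff (-t)).hasDerivAt.comp t (hasDerivAt_neg t)
    have h2 := h1.neg; rw [mul_neg_one, neg_neg] at h2; exact h2
  have hφdiff : Differentiable ℝ φ := fun t => (hφderiv t).differentiableAt
  have hφineq : ∀ t, deriv φ t ≤ -(φ t) ^ 2 / c := by
    intro t
    rw [(hφderiv t).deriv]
    have := hineq (-t)
    simpa [hφ] using this
  have hle : ∀ t, 0 ≤ φ t := expansion_nonneg_aux c hc φ hφdiff hφineq
  intro t
  have h1 := hge t
  have h2 := hle (-t)
  simp only [hφ, neg_neg] at h2
  linarith
end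

section
/- Let c > 0 and let r : [0, ∞) → ℝ be continuous with r(t) ≥ 0 for all t and ∫₀ᵗ r(s) ds → ∞ as t → ∞. Then there is no differentiable function θ : [0, ∞) → ℝ satisfying θ′(t) ≤ −θ(t)²/c − r(t) for all t ≥ 0. -/
open MeasureTheory intervalIntegral Set Filter

/-- Analytic core of singularity theorems with an averaged energy condition:
if `r ≥ 0` is continuous on `[0, ∞)` and `∫₀ᵗ r → ∞` as `t → ∞`, then no
differentiable `θ : [0, ∞) → ℝ` satisfies `θ' ≤ -θ²/c - r`. -/
theorem no_complete_solution_averaged_condition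
    (c : ℝ) (hc : 0 < c) (r : ℝ → ℝ)
    (hrcont : ContinuousOn r (Set.Ici 0))
    (hrpos : ∀ t : ℝ, 0 ≤ t → 0 ≤ r t)
    (hrdiv : Filter.Tendsto (fun t : ℝ => ∫ s in (0 : ℝ)..t, r s)
      Filter.atTop Filter.atTop) :
    ¬ ∃ θ : ℝ → ℝ, (∀ t : ℝ, 0 ≤ t → DifferentiableAt ℝ θ t) ∧
      (∀ t : ℝ, 0 ≤ t → deriv θ t ≤ -(θ t) ^ 2 / c - r t) := by
  rintro ⟨θ, hdiff, hineq⟩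
  set F : ℝ → ℝ := fun t => ∫ s in (0 : ℝ)..t, r s with hF
  -- interval integrability
  have hint : ∀ a b : ℝ, 0 ≤ a → a ≤ b → IntervalIntegrable r volume a b := by
    intro a b ha hab
    refine (hrcont.mono ?_).intervalIntegrable
    rw [Set.uIcc_of_le hab]
    exact fun x hx => le_trans ha hx.1
  -- derivative of F at interior points
  have hFderiv : ∀ x : ℝ, 0 < x → HasDerivAt F (r x) x := by
    intro x hx
    refine intervalIntegral.integral_hasDerivAt_right (hint 0 x le_rfl hx.le)
      (ContinuousOn.stronglyMeasurableAtFilter isOpen_Ioi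
        (hrcont.mono Ioi_subset_Ici_self) x hx) ?_
    exact (hrcont.continuousAt (Ici_mem_nhds hx))
  -- key monotonicity: θ t + F t ≤ θ 0 for all t ≥ 0
  have key : ∀ t : ℝ, 0 ≤ t → θ t + F t ≤ θ 0 := by
    intro t ht
    rcases eq_or_lt_of_le ht with h | h
    · simp [F, ← h]
    have hanti : AntitoneOn (fun x => θ x + F x) (Set.Icc 0 t) := by
      have hcF : ContinuousOn F (Set.Icc 0 t) := by
        have := intervalIntegral.continuousOn_primitive_interval'
          (μ := volume) (hint 0 t le_rfl ht) (left_mem_uIcc (a := (0:ℝ)) (b := t))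
        rwa [Set.uIcc_of_le ht] at this
      refine antitoneOn_of_deriv_nonpos (convex_Icc 0 t) ?_ ?_ ?_
      · exact fun x hx => ((hdiff x hx.1).continuousAt.continuousWithinAt).add (hcF x hx)
      · intro x hx
        rw [interior_Icc] at hx
        exact (((hdiff x hx.1.le).add (hFderiv x hx.1).differentiableAt)).differentiableWithinAt
      · intro x hx
        rw [interior_Icc] at hx
        have hd : HasDerivAt (fun x => θ x + F x) (deriv θ x + r x) x :=
          (hdiff x hx.1.le).hasDerivAt.add (hFderiv x hx.1)
        rw [hd.deriv]
        have h1 := hineq x hx.1.le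
        have h2 : -(θ x) ^ 2 / c ≤ 0 :=
          div_nonpos_of_nonpos_of_nonneg (neg_nonpos.2 (sq_nonneg _)) hc.le
        linarith
    have := hanti (Set.left_mem_Icc.2 ht) (Set.right_mem_Icc.2 ht) ht
    simpa [F] using this
  -- choose T with F T large
  obtain ⟨T, hT⟩ := ((hrdiv.eventually_ge_atTop (θ 0 + 1)).and
    (Filter.eventually_ge_atTop (0:ℝ))).exists
  obtain ⟨hFT, hT0⟩ := hT
  -- θ t ≤ -1 for all t ≥ T
  have hneg : ∀ t : ℝ, T ≤ t → θ t ≤ -1 := by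
    intro t htT
    have ht0 : 0 ≤ t := le_trans hT0 htT
    have hsplit : F T + ∫ s in T..t, r s = F t :=
      intervalIntegral.integral_add_adjacent_intervals (hint 0 T le_rfl hT0)
        (hint T t hT0 htT)
    have hpos : 0 ≤ ∫ s in T..t, r s :=
      intervalIntegral.integral_nonneg htT (fun u hu => hrpos u (le_trans hT0 hu.1))
    have := key t ht0
    linarith
  -- now the blow-up argument via u = -c/θ + t antitone on [T, ∞)
  have hθne : ∀ t : ℝ, T ≤ t → θ t ≠ 0 := fun t ht => by
    have := hneg t ht; linarith
  have hθlt : ∀ t : ℝ, T ≤ t → θ t < 0 := fun t ht => by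
    have := hneg t ht; linarith
  have hanti2 : AntitoneOn (fun t => -c / θ t + t) (Set.Ici T) := by
    refine antitoneOn_of_deriv_nonpos (convex_Ici T) ?_ ?_ ?_
    · intro x hx
      exact (((differentiableAt_const (-c)).div (hdiff x (le_trans hT0 hx))
        (hθne x hx)).add differentiableAt_id).continuousAt.continuousWithinAt
    · intro x hx
      rw [interior_Ici] at hx
      exact (((differentiableAt_const (-c)).div (hdiff x (le_trans hT0 hx.le))
        (hθne x hx.le)).add differentiableAt_id).differentiableWithinAt
    · intro x hx
      rw [interior_Ici] at hx
      have hx0 : 0 ≤ x := le_trans hT0 hx.le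
      have hne := hθne x hx.le
      have hd : HasDerivAt (fun t => -c / θ t + t)
          ((0 * θ x - -c * deriv θ x) / θ x ^ 2 + 1) x :=
        ((hasDerivAt_const x (-c)).div (hdiff x hx0).hasDerivAt hne).add (hasDerivAt_id x)
      rw [hd.deriv]
      have heq : (0 * θ x - -c * deriv θ x) / θ x ^ 2 + 1
          = (c * deriv θ x + θ x ^ 2) / θ x ^ 2 := by
        field_simp
        ring
      rw [heq]
      apply div_nonpos_of_nonpos_of_nonneg _ (sq_nonneg _)
      have h1 := hineq x hx0
      have h2 := hrpos x hx0
      have h3 : c * deriv θ x ≤ c * (-(θ x) ^ 2 / c - r x) :=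
        mul_le_mul_of_nonneg_left h1 hc.le
      have h4 : c * (-(θ x) ^ 2 / c - r x) = -(θ x) ^ 2 - c * r x := by
        field_simp
      nlinarith
  -- contradiction
  have hcT : 0 < -c / θ T := div_pos_of_neg_of_neg (by linarith) (hθlt T le_rfl)
  have htT : T ≤ T + -c / θ T + 1 := by linarith
  have h5 := hanti2 Set.self_mem_Ici (Set.mem_Ici.2 htT) htT
  have h6 : c / θ (T + -c / θ T + 1) < 0 := div_neg_of_pos_of_neg hc (hθlt _ htT)
  have h7 : -c / θ (T + -c / θ T + 1) = -(c / θ (T + -c / θ T + 1)) := by ring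
  simp only at h5
  rw [h7] at h5
  linarith
end

section
/- Let A, Λ ∈ ℝ, t₀ ∈ ℝ, T ∈ (t₀, ∞], and let a : [t₀, T) → ℝ be twice differentiable with a(t) > 0, a″(t) = (Λ/3)·a(t) − A/(2·a(t)²), and Λ·a(t)³ < (3/2)·A for all t ∈ [t₀, T). If a′(t₀) < 0, then T ≤ t₀ + a(t₀)/(−a′(t₀)). -/
/-- Friedman's 'creation time' singularity: for a closed dust universe with
`a'' = (Λ/3)·a - A/(2a²)` and `Λ·a³ < (3/2)·A`, a contracting solution
(`a'(t₀) < 0`) with `a > 0` on `[t₀, T)` satisfies `T ≤ t₀ + a(t₀)/(-a'(t₀))`. -/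
theorem friedman_creation_time
    (A Λ t₀ : ℝ) (T : EReal) (hT : (t₀ : EReal) < T)
    (a : ℝ → ℝ)
    (hdiff : ∀ t : ℝ, t₀ ≤ t → (t : EReal) < T → DifferentiableAt ℝ a t)
    (hdiff2 : ∀ t : ℝ, t₀ ≤ t → (t : EReal) < T → DifferentiableAt ℝ (deriv a) t)
    (hpos : ∀ t : ℝ, t₀ ≤ t → (t : EReal) < T → 0 < a t)
    (hode : ∀ t : ℝ, t₀ ≤ t → (t : EReal) < T →
      deriv (deriv a) t = (Λ / 3) * a t - A / (2 * (a t) ^ 2))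
    (hΛ : ∀ t : ℝ, t₀ ≤ t → (t : EReal) < T → Λ * (a t) ^ 3 < (3 / 2) * A)
    (hcontract : deriv a t₀ < 0) :
    T ≤ ((t₀ + a t₀ / (-(deriv a t₀)) : ℝ) : EReal) := by
  by_contra hlt
  push_neg at hlt
  set m := deriv a t₀ with hm
  have hmpos : 0 < -m := by linarith
  have hmne : m ≠ 0 := by linarith
  have ha0 : 0 < a t₀ := hpos t₀ le_rfl hT
  set B : ℝ := t₀ + a t₀ / (-m) with hB
  have htB : t₀ < B := by
    have : 0 < a t₀ / (-m) := div_pos ha0 hmpos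
    simp only [hB]; linarith
  have hin : ∀ s, s ∈ Set.Icc t₀ B → t₀ ≤ s ∧ (s : EReal) < T := by
    intro s hs
    exact ⟨hs.1, lt_of_le_of_lt (EReal.coe_le_coe_iff.mpr hs.2) hlt⟩
  -- second derivative is negative on the relevant range
  have hconc : ∀ s, t₀ ≤ s → (s : EReal) < T → deriv (deriv a) s < 0 := by
    intro s h1 h2
    rw [hode s h1 h2]
    have hΛs := hΛ s h1 h2
    have has := hpos s h1 h2
    have key : (Λ / 3) * a s - A / (2 * (a s) ^ 2) =
        (2 * (Λ * (a s) ^ 3) - 3 * A) / (6 * (a s) ^ 2) := by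
      field_simp
      ring
    rw [key]
    apply div_neg_of_neg_of_pos
    · linarith
    · positivity
  -- deriv a is antitone on Icc t₀ B
  have hderivanti : AntitoneOn (deriv a) (Set.Icc t₀ B) := by
    apply antitoneOn_of_deriv_nonpos (convex_Icc _ _)
    · intro s hs
      exact ((hdiff2 s (hin s hs).1 (hin s hs).2).continuousAt).continuousWithinAt
    · intro s hs
      have hs' := hin s (interior_subset hs)
      exact (hdiff2 s hs'.1 hs'.2).differentiableWithinAt
    · intro s hs
      rw [interior_Icc] at hs
      have hs' := hin s (Set.Ioo_subset_Icc_self hs)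
      exact le_of_lt (hconc s hs'.1 hs'.2)
  -- g t = a t - m * t is antitone on Icc t₀ B
  have hganti : AntitoneOn (fun t => a t - m * t) (Set.Icc t₀ B) := by
    apply antitoneOn_of_deriv_nonpos (convex_Icc _ _)
    · intro s hs
      have hs' := hin s hs
      exact ((hdiff s hs'.1 hs'.2).sub (differentiableAt_id.const_mul m)).continuousAt.continuousWithinAt
    · intro s hs
      rw [interior_Icc] at hs
      have hs' := hin s (Set.Ioo_subset_Icc_self hs)
      exact ((hdiff s hs'.1 hs'.2).sub (differentiableAt_id.const_mul m)).differentiableWithinAt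
    · intro s hs
      rw [interior_Icc] at hs
      have hs' := hin s (Set.Ioo_subset_Icc_self hs)
      have hd : deriv (fun t => a t - m * t) s = deriv a s - m := by
        have h := ((hdiff s hs'.1 hs'.2).hasDerivAt.sub
          ((hasDerivAt_id s).const_mul m)).deriv
        simpa [Pi.sub_def] using h
      rw [hd]
      have : deriv a s ≤ deriv a t₀ :=
        hderivanti (Set.left_mem_Icc.mpr (le_of_lt htB))
          (Set.Ioo_subset_Icc_self hs) hs.1.le
      simpa [hm] using this
  have hBmem : B ∈ Set.Icc t₀ B := Set.right_mem_Icc.mpr htB.le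
  have h1 : a B - m * B ≤ a t₀ - m * t₀ :=
    hganti (Set.left_mem_Icc.mpr htB.le) hBmem htB.le
  have hcalc : m * B = m * t₀ - a t₀ := by
    simp only [hB]
    field_simp
    ring
  have haB : 0 < a B := hpos B (hin B hBmem).1 (hin B hBmem).2
  rw [hcalc] at h1
  linarith
end

section
/- Let θ₀ < 0 and ρ₀ > 0, and set T = 3/(−θ₀). Suppose θ, ρ : [0, T) → ℝ are differentiable with θ(0) = θ₀, ρ(0) = ρ₀, θ′(t) ≤ −θ(t)²/3, and ρ′(t) = −θ(t)·ρ(t) for all t ∈ [0, T). Then ρ(t) ≥ ρ₀·(1 + θ₀·t/3)⁻³ for all t ∈ [0, T); in particular ρ(t) → ∞ as t → T⁻. -/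
/-- Analytic content of the Raychaudhuri–Komar singularity theorem: for
irrotational dust with initially contracting congruence (`θ₀ < 0`), the
Raychaudhuri inequality `θ' ≤ -θ²/3` and the continuity equation `ρ' = -θρ`
force `ρ t ≥ ρ₀·(1 + θ₀ t/3)⁻³` on `[0, T)` with `T = 3/(-θ₀)`; in particular
the energy density diverges as `t → T⁻`. -/
theorem raychaudhuri_komar_density_divergence
    (θ₀ ρ₀ : ℝ) (hθ₀ : θ₀ < 0) (hρ₀ : 0 < ρ₀)
    (T : ℝ) (hTdef : T = 3 / (-θ₀))
    (θ ρ : ℝ → ℝ)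
    (hθdiff : ∀ t : ℝ, 0 ≤ t → t < T → DifferentiableAt ℝ θ t)
    (hρdiff : ∀ t : ℝ, 0 ≤ t → t < T → DifferentiableAt ℝ ρ t)
    (hθ0 : θ 0 = θ₀) (hρ0 : ρ 0 = ρ₀)
    (hray : ∀ t : ℝ, 0 ≤ t → t < T → deriv θ t ≤ -(θ t) ^ 2 / 3)
    (hcont : ∀ t : ℝ, 0 ≤ t → t < T → deriv ρ t = -(θ t) * ρ t) :
    (∀ t : ℝ, 0 ≤ t → t < T → ρ₀ / (1 + θ₀ * t / 3) ^ 3 ≤ ρ t) ∧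
    Filter.Tendsto ρ (nhdsWithin T (Set.Iio T)) Filter.atTop := by
  have hθ₀' : 0 < -θ₀ := by linarith
  have hT0 : 0 < T := by rw [hTdef]; positivity
  -- positivity of 1 + θ₀ t / 3 for t < T
  have hcpos : ∀ t : ℝ, t < T → 0 < 1 + θ₀ * t / 3 := by
    intro t ht
    rw [hTdef, lt_div_iff₀ hθ₀'] at ht
    nlinarith
  have key : ∀ t : ℝ, 0 ≤ t → t < T → ρ₀ / (1 + θ₀ * t / 3) ^ 3 ≤ ρ t := by
    intro t ht0 htT
    -- clamped version of θ, continuous on all of ℝ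
    set φ : ℝ → ℝ := fun s => θ (min (max s 0) t) with hφdef
    have hmem : ∀ s : ℝ, 0 ≤ min (max s 0) t ∧ min (max s 0) t < T := by
      intro s
      constructor
      · exact le_min (le_max_right s 0) ht0
      · exact lt_of_le_of_lt (min_le_right _ _) htT
    have hφcont : Continuous φ := by
      have hclamp : Continuous (fun s : ℝ => min (max s 0) t) := by continuity
      rw [continuous_iff_continuousAt]
      intro s
      show ContinuousAt (θ ∘ fun s : ℝ => min (max s 0) t) s
      have hcl : ContinuousAt (fun s : ℝ => min (max s 0) t) s := hclamp.continuousAt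
      exact ContinuousAt.comp (g := θ) (f := fun s : ℝ => min (max s 0) t) (x := s)
        ((hθdiff _ (hmem s).1 (hmem s).2).continuousAt) hcl
    have hφeq : ∀ s : ℝ, 0 ≤ s → s ≤ t → φ s = θ s := by
      intro s hs0 hst
      simp [hφdef, max_eq_left hs0, min_eq_left hst]
    set Θ : ℝ → ℝ := fun s => ∫ x in (0:ℝ)..s, φ x with hΘdef
    have hΘderiv : ∀ s : ℝ, HasDerivAt Θ (φ s) s := by
      intro s
      exact intervalIntegral.integral_hasDerivAt_right
        (hφcont.intervalIntegrable _ _)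
        (hφcont.stronglyMeasurableAtFilter _ _)
        hφcont.continuousAt
    have hΘ0 : Θ 0 = 0 := by simp [hΘdef]
    set a : ℝ → ℝ := fun s => Real.exp (Θ s / 3) with hadef
    have hapos : ∀ s, 0 < a s := fun s => Real.exp_pos _
    have haderiv : ∀ s : ℝ, HasDerivAt a (φ s / 3 * a s) s := by
      intro s
      have h := ((hΘderiv s).div_const 3).exp
      rw [mul_comm] at h
      exact h
    have ha0 : a 0 = 1 := by simp [hadef, hΘ0]
    set A : ℝ → ℝ := fun s => φ s / 3 * a s with hAdef
    have hacont : Continuous a := by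
      rw [continuous_iff_continuousAt]; exact fun s => (haderiv s).continuousAt
    have hAcont : Continuous A := (hφcont.div_const 3).mul hacont
    -- derivative of A on the interior
    have hA' : ∀ s ∈ Set.Ioo (0:ℝ) t, HasDerivAt A
        (deriv θ s / 3 * a s + θ s / 3 * (θ s / 3 * a s)) s := by
      intro s hs
      have hsmem := Set.mem_Icc_of_Ioo hs
      have hφθ : φ =ᶠ[nhds s] θ := by
        filter_upwards [Ioo_mem_nhds hs.1 hs.2] with x hx
        exact hφeq x hx.1.le hx.2.le
      have hθd : HasDerivAt θ (deriv θ s) s :=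
        (hθdiff s hsmem.1 (lt_of_le_of_lt hsmem.2 htT)).hasDerivAt
      have hφd : HasDerivAt φ (deriv θ s) s := hθd.congr_of_eventuallyEq hφθ
      have hthis := (hφd.div_const 3).mul (haderiv s)
      have hφs : φ s = θ s := hφeq s hsmem.1 hsmem.2
      rw [hφs] at hthis
      exact hthis
    have hAanti : AntitoneOn A (Set.Icc 0 t) := by
      apply antitoneOn_of_deriv_nonpos (convex_Icc 0 t) hAcont.continuousOn
      · intro x hx
        rw [interior_Icc] at hx
        exact (hA' x hx).differentiableAt.differentiableWithinAt
      · intro x hx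
        rw [interior_Icc] at hx
        rw [(hA' x hx).deriv]
        have hxT : x < T := hx.2.trans htT
        have hr := hray x hx.1.le hxT
        have hax := hapos x
        nlinarith [mul_le_mul_of_nonneg_right hr hax.le]
    have hA0 : A 0 = θ₀ / 3 := by
      have : φ 0 = θ 0 := hφeq 0 le_rfl ht0
      simp [hAdef, this, hθ0, ha0]
    -- concavity bound: a t ≤ 1 + θ₀ t / 3
    have hat : a t ≤ 1 + θ₀ * t / 3 := by
      rcases eq_or_lt_of_le ht0 with h | h
      · rw [← h, ha0]; norm_num
      · obtain ⟨c, hc, hceq⟩ := exists_hasDerivAt_eq_slope a A h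
          hacont.continuousOn (fun x _ => haderiv x)
        have hAc : A c ≤ A 0 :=
          hAanti (Set.left_mem_Icc.2 ht0) (Set.mem_Icc_of_Ioo hc) hc.1.le
        rw [hA0] at hAc
        rw [eq_div_iff (sub_ne_zero.2 h.ne')] at hceq
        rw [ha0] at hceq
        nlinarith
    -- ρ s * exp (Θ s) is constant on [0, t]
    have hF : ∀ s ∈ Set.Icc (0:ℝ) t, ρ s * Real.exp (Θ s) = ρ₀ := by
      have hFd : ∀ s ∈ Set.Icc (0:ℝ) t,
          HasDerivAt (fun x => ρ x * Real.exp (Θ x)) 0 s := by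
        intro s hs
        have hsT : s < T := lt_of_le_of_lt hs.2 htT
        have hρd : HasDerivAt ρ (deriv ρ s) s := (hρdiff s hs.1 hsT).hasDerivAt
        have hed : HasDerivAt (fun x => Real.exp (Θ x)) (Real.exp (Θ s) * φ s) s :=
          (hΘderiv s).exp
        have := hρd.mul hed
        have hφs : φ s = θ s := hφeq s hs.1 hs.2
        have hρ' := hcont s hs.1 hsT
        have h0 : deriv ρ s * Real.exp (Θ s) + ρ s * (Real.exp (Θ s) * φ s) = 0 := by
          rw [hρ', hφs]; ring
        rw [h0] at this
        exact this
      have hFcont : ContinuousOn (fun x => ρ x * Real.exp (Θ x)) (Set.Icc 0 t) :=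
        fun s hs => ((hFd s hs).continuousAt).continuousWithinAt
      intro s hs
      rcases eq_or_lt_of_le hs.1 with h | h
      · rw [← h, hΘ0, hρ0]; simp
      · obtain ⟨c, hc, hceq⟩ := exists_hasDerivAt_eq_slope
          (fun x => ρ x * Real.exp (Θ x)) (fun _ => 0) h
          (hFcont.mono (Set.Icc_subset_Icc le_rfl hs.2))
          (fun x hx => hFd x ⟨hx.1.le, hx.2.le.trans hs.2⟩)
        have hceq' := hceq.symm
        rw [div_eq_zero_iff] at hceq'
        rcases hceq' with h' | h'
        · rw [hΘ0, hρ0] at h'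
          simp at h'
          linarith
        · exact absurd h' (by simpa using h.ne')
      -- done
    have hρt : ρ t * Real.exp (Θ t) = ρ₀ := hF t ⟨ht0, le_rfl⟩
    have hexp : Real.exp (Θ t) = (a t) ^ 3 := by
      rw [hadef]
      rw [← Real.exp_nat_mul]
      norm_num
      ring
    have hc0 : 0 < 1 + θ₀ * t / 3 := hcpos t htT
    have hat3 : (a t) ^ 3 ≤ (1 + θ₀ * t / 3) ^ 3 :=
      pow_le_pow_left₀ (hapos t).le hat 3
    have hρteq : ρ t = ρ₀ / (a t) ^ 3 := by
      rw [eq_div_iff (by positivity)]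
      rw [← hexp]; exact hρt
    rw [hρteq]
    gcongr
  refine ⟨key, ?_⟩
  -- divergence
  have hg : Filter.Tendsto (fun t : ℝ => (1 + θ₀ * t / 3) ^ 3)
      (nhdsWithin T (Set.Iio T)) (nhdsWithin 0 (Set.Ioi 0)) := by
    apply tendsto_nhdsWithin_of_tendsto_nhds_of_eventually_within
    · have hθT : θ₀ * T = -3 := by
        rw [hTdef]
        field_simp
        rw [div_self hθ₀.ne]
      have hlim : (1 + θ₀ * T / 3) ^ 3 = 0 := by
        rw [hθT]; norm_num
      have : Filter.Tendsto (fun t : ℝ => (1 + θ₀ * t / 3) ^ 3) (nhds T)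
          (nhds ((1 + θ₀ * T / 3) ^ 3)) := by
        apply Continuous.tendsto
        continuity
      rw [hlim] at this
      exact this.mono_left nhdsWithin_le_nhds
    · filter_upwards [self_mem_nhdsWithin] with x hx
      exact pow_pos (hcpos x hx) 3
  have hdiv : Filter.Tendsto (fun t : ℝ => ρ₀ / (1 + θ₀ * t / 3) ^ 3)
      (nhdsWithin T (Set.Iio T)) Filter.atTop := by
    simp only [div_eq_mul_inv]
    exact Filter.Tendsto.const_mul_atTop hρ₀ hg.inv_tendsto_nhdsGT_zero
  apply Filter.tendsto_atTop_mono' _ _ hdiv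
  have hmemIoo : Set.Ioo 0 T ∈ nhdsWithin T (Set.Iio T) := by
    apply mem_nhdsWithin.2
    exact ⟨Set.Ioi 0, isOpen_Ioi, hT0, by
      rintro x ⟨hx1, hx2⟩
      exact ⟨hx1, hx2⟩⟩
  filter_upwards [hmemIoo] with x hx
  exact key x hx.1.le hx.2
end

section
/- Let A > 0, χ₀ ∈ (0, π/2), let I ⊆ ℝ be an interval, and let a : I → ℝ be differentiable with a(t) > 0 and a′(t)² = A/a(t) − 1 for all t ∈ I. Define r : I → ℝ by r(t) = sin(χ₀)·a(t). Then r′(t)² = α/r(t) − (1 − E²) for all t ∈ I, where α = A·sin³(χ₀) and E = cos(χ₀). Moreover, α is the unique constant with this property: if α′ ∈ ℝ satisfies r′(t)² = α′/r(t) − (1 − cos²(χ₀)) for some t ∈ I, then α′ = A·sin³(χ₀). -/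
/-- Oppenheimer–Snyder junction condition: if the scale factor satisfies the
closed Friedman dust equation `a'² = A/a - 1`, then `r = sin(χ₀)·a` satisfies
the Schwarzschild radial geodesic equation `r'² = α/r - (1 - E²)` with
`α = A·sin³(χ₀)` and `E = cos(χ₀)`, and this value of `α` is unique. -/
theorem oppenheimer_snyder_junction
    (A χ₀ : ℝ) (hA : 0 < A) (hχ₀ : χ₀ ∈ Set.Ioo 0 (Real.pi / 2))
    (I : Set ℝ) (hI : I.OrdConnected)
    (a : ℝ → ℝ)
    (hdiff : ∀ t ∈ I, DifferentiableAt ℝ a t)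
    (hpos : ∀ t ∈ I, 0 < a t)
    (hfried : ∀ t ∈ I, (deriv a t) ^ 2 = A / a t - 1)
    (r : ℝ → ℝ) (hr : r = fun t => Real.sin χ₀ * a t)
    (α E : ℝ) (hα : α = A * (Real.sin χ₀) ^ 3) (hE : E = Real.cos χ₀) :
    (∀ t ∈ I, (deriv r t) ^ 2 = α / r t - (1 - E ^ 2)) ∧
    (∀ α' : ℝ, (∃ t ∈ I, (deriv r t) ^ 2 = α' / r t - (1 - (Real.cos χ₀) ^ 2)) →
      α' = A * (Real.sin χ₀) ^ 3) := by
  obtain ⟨h0, h2⟩ := hχ₀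
  have hs : 0 < Real.sin χ₀ :=
    Real.sin_pos_of_pos_of_lt_pi h0 (lt_trans h2 (by linarith [Real.pi_pos]))
  have hkey : ∀ t ∈ I, (deriv r t) ^ 2 = α / r t - (1 - (Real.cos χ₀) ^ 2) := by
    intro t ht
    have hat := hpos t ht
    have hdr : deriv r t = Real.sin χ₀ * deriv a t := by
      rw [hr, deriv_const_mul _ (hdiff t ht)]
    have hsq : Real.sin χ₀ ^ 2 = 1 - Real.cos χ₀ ^ 2 := by
      have := Real.sin_sq_add_cos_sq χ₀; linarith
    rw [hdr, mul_pow, hfried t ht, hr, hα, hsq]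
    have : Real.sin χ₀ * a t ≠ 0 := by positivity
    field_simp
    linear_combination (-A) * hsq
  refine ⟨by simpa [hE] using hkey, ?_⟩
  rintro α' ⟨t, ht, hα'⟩
  have h1 := hkey t ht
  have hrt : 0 < r t := by rw [hr]; exact mul_pos hs (hpos t ht)
  have heq : α' / r t = α / r t := by linarith
  have : α' = α := by
    field_simp [hrt.ne'] at heq
    exact heq
  rw [this, hα]
end
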